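/- arXiv:1507.08697 — 2 statements merged into one kernel-verified Lean document; each statement's English description precedes it below -/
import Mathlib

section
/- There is no pair (i, ι) where i is an additive endofunctor of the category C(ℤ) of complexes of abelian groups, landing in the full subcategory of h-injective complexes with injective components, and ι : id → i is a natural transformation such that ι_M : M → i(M) is a quasi-isomorphism for every complex M. -/
/-!
There is no pair `(i, ι)` where `i` is an additive endofunctor of the category
`C(ℤ)` of complexes of abelian groups landing in the full subcategory of
h-injective complexes with injective components, and `ι : id → i` is a natural
transformation such that `ι_M : M → i(M)` is a quasi-isomorphism for every
complex `M`.
-/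

open CategoryTheory Limits

noncomputable section

/-- A complex is acyclic if it is exact in every degree. -/
def IsAcyclic {C : Type u} [Category.{v} C] [Abelian C]
    (K : CochainComplex C ℤ) : Prop :=
  ∀ n : ℤ, K.ExactAt n

/-- A complex `I` is h-injective if every chain map from an acyclic complex to `I`
is null-homotopic. -/
def IsHInjective {C : Type u} [Category.{v} C] [Abelian C]
    (I : CochainComplex C ℤ) : Prop :=
  ∀ (A : CochainComplex C ℤ), IsAcyclic A → ∀ f : A ⟶ I, Nonempty (Homotopy f 0)

theorem stmt_5 :
    ¬ ∃ (i : CochainComplex AddCommGrpCat.{0} ℤ ⥤ CochainComplex AddCommGrpCat.{0} ℤ)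
        (ι : 𝟭 (CochainComplex AddCommGrpCat.{0} ℤ) ⟶ i),
      i.Additive ∧
      (∀ M : CochainComplex AddCommGrpCat.{0} ℤ,
        IsHInjective (i.obj M) ∧ ∀ n : ℤ, Injective ((i.obj M).X n)) ∧
      (∀ M : CochainComplex AddCommGrpCat.{0} ℤ, QuasiIso (ι.app M)) := by
  rintro ⟨i, ι, hAdd, hFib, hQI⟩
  set M : CochainComplex AddCommGrpCat.{0} ℤ :=
    (HomologicalComplex.single AddCommGrpCat (ComplexShape.up ℤ) 0).obj
      (AddCommGrpCat.of (ZMod 2)) with hM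
  -- 2 • 𝟙 M = 0
  have h2 : (2 : ℤ) • 𝟙 M = 0 := by
    apply HomologicalComplex.hom_ext
    intro n
    by_cases hn : n = 0
    · subst hn
      rw [HomologicalComplex.zsmul_f_apply]
      show (2 : ℤ) • 𝟙 (M.X 0) = 0
      let e := HomologicalComplex.singleObjXSelf (ComplexShape.up ℤ) 0 (AddCommGrpCat.of (ZMod 2))
      have he : (2 : ℤ) • 𝟙 (M.X 0) = e.hom ≫ ((2 : ℤ) • 𝟙 (AddCommGrpCat.of (ZMod 2))) ≫ e.inv := by
        simp
        rfl
      rw [he]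
      have h0 : (2 : ℤ) • 𝟙 (AddCommGrpCat.of (ZMod 2)) = 0 := by
        ext x
        show (2 : ℤ) • x = 0
        have hx : ∀ y : ZMod 2, y + y = 0 := by decide
        rw [two_zsmul]
        exact hx x
      rw [h0]
      simp
    · exact (HomologicalComplex.isZero_single_obj_X (ComplexShape.up ℤ) 0 _ n hn).eq_of_src _ _
  -- 2 • 𝟙 (i.obj M) = 0
  have h2' : (2 : ℤ) • 𝟙 (i.obj M) = 0 := by
    have h : i.map ((2 : ℤ) • 𝟙 M) = (2 : ℤ) • i.map (𝟙 M) := i.map_zsmul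
    rw [h2, i.map_id] at h
    rw [← h, Functor.map_zero]
  -- each component of i.obj M is zero
  have hz : ∀ n : ℤ, IsZero ((i.obj M).X n) := by
    intro n
    have hinj := (hFib M).2 n
    have hall : ∀ z : (i.obj M).X n, z = 0 := by
      intro z
      let f : AddCommGrpCat.of ℤ ⟶ (i.obj M).X n := AddCommGrpCat.ofHom (zmultiplesHom _ z)
      let m : AddCommGrpCat.of ℤ ⟶ AddCommGrpCat.of ℤ := AddCommGrpCat.ofHom (zmultiplesHom _ (2 : ℤ))
      have : Mono m := by
        rw [AddCommGrpCat.mono_iff_injective]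
        intro a b hab
        simpa [m, zmultiplesHom] using hab
      obtain ⟨g, hg⟩ := Injective.factors f m
      have h1 : z = g ((2 : ℤ)) := by
        have := congrArg (fun φ => φ (1 : ℤ)) hg
        simpa [f, m, zmultiplesHom] using this.symm
      have h2c : ((2 : ℤ) • 𝟙 (i.obj M)).f n = 0 := by rw [h2']; rfl
      calc z = g ((2 : ℤ) • (1 : ℤ)) := by simpa using h1
        _ = (2 : ℤ) • g (1 : ℤ) := map_zsmul _ _ _
        _ = (((2 : ℤ) • 𝟙 (i.obj M)).f n) (g (1 : ℤ)) := by
            rw [HomologicalComplex.zsmul_f_apply]; rfl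
        _ = 0 := by rw [h2c]; rfl
    have : Subsingleton ((i.obj M).X n) :=
      ⟨fun x y => by rw [hall x, hall y]⟩
    exact AddCommGrpCat.isZero_of_subsingleton _
  -- i.obj M is exact at 0
  have hexact : (i.obj M).ExactAt 0 := by
    rw [HomologicalComplex.exactAt_iff]
    exact ShortComplex.exact_of_isZero_X₂ _ (hz 0)
  -- M is exact at 0 via quasi-iso
  have hqi : QuasiIsoAt (ι.app M) 0 := (hQI M).1 0
  have hMexact : M.ExactAt 0 :=
    (quasiIsoAt_iff_exactAt' (ι.app M) 0 hexact).mp hqi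
  -- but homology of M at 0 is ZMod 2 ≠ 0
  rw [HomologicalComplex.exactAt_iff_isZero_homology] at hMexact
  have hz2 : IsZero (AddCommGrpCat.of (ZMod 2)) :=
    hMexact.of_iso (HomologicalComplex.singleObjHomologySelfIso
      (ComplexShape.up ℤ) 0 (AddCommGrpCat.of (ZMod 2))).symm
  have hid : 𝟙 (AddCommGrpCat.of (ZMod 2)) = 0 := hz2.eq_of_src _ _
  have : (1 : ZMod 2) = 0 := congrArg (fun g => g (1 : ZMod 2)) hid
  exact one_ne_zero this

end
end

section
/- There is no additive functor F from the category of abelian groups to the arrow category of abelian groups such that for every abelian group A, F(A) is a monomorphism A ↪ I_A with I_A an injective abelian group (where the source of the arrow F(A) is A, naturally in A). -/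
open CategoryTheory

theorem stmt_6 :
    ¬ ∃ (I : AddCommGrpCat.{0} ⥤ AddCommGrpCat.{0}) (m : 𝟭 AddCommGrpCat.{0} ⟶ I),
      I.Additive ∧
      ∀ A : AddCommGrpCat.{0}, Mono (m.app A) ∧ Injective (I.obj A) := by
  rintro ⟨I, m, hadd, h⟩
  set A : AddCommGrpCat.{0} := AddCommGrpCat.of (ZMod 2) with hA
  obtain ⟨hmono, hinj⟩ := h A
  -- `2 • 𝟙 A = 0` since every element of `ZMod 2` has order dividing 2
  have h2 : (2 : ℤ) • (𝟙 A) = 0 := by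
    ext x
    have hz : ∀ z : ZMod 2, (2 : ℤ) • z = 0 := by decide
    exact hz x
  -- hence `I(A)` is 2-torsion
  have htor : ∀ y : I.obj A, (2 : ℤ) • y = 0 := by
    intro y
    have : (2 : ℤ) • 𝟙 (I.obj A) = 0 := by
      have := congrArg I.map h2
      rwa [I.map_zsmul, I.map_id, Functor.map_zero] at this
    calc (2 : ℤ) • y = ((2 : ℤ) • 𝟙 (I.obj A)) y := rfl
      _ = (0 : I.obj A ⟶ I.obj A) y := by rw [this]
      _ = 0 := rfl
  -- `I(A)` is 2-divisible since it is injective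
  have hdiv : ∀ x : I.obj A, ∃ y : I.obj A, (2 : ℤ) • y = x := by
    intro x
    let f : AddCommGrpCat.of ℤ ⟶ AddCommGrpCat.of ℤ := AddCommGrpCat.ofHom (zmultiplesHom ℤ (2 : ℤ))
    haveI hfmono : Mono f := by
      rw [AddCommGrpCat.mono_iff_injective]
      intro a b hab
      simpa [f, zmultiplesHom_apply, smul_eq_mul] using hab
    let g : AddCommGrpCat.of ℤ ⟶ I.obj A := AddCommGrpCat.ofHom (zmultiplesHom (I.obj A) x)
    obtain ⟨k, hk⟩ := hinj.factors g f
    refine ⟨k (1 : ℤ), ?_⟩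
    have := ConcreteCategory.congr_hom hk (1 : ℤ)
    rw [CategoryTheory.comp_apply] at this
    have h1 : f (1 : ℤ) = (2 : ℤ) := by simp [f, zmultiplesHom_apply]
    rw [h1] at this
    have h2k : k (2 : ℤ) = (2 : ℤ) • k (1 : ℤ) := by
      have : ((2 : ℤ) : ↑(AddCommGrpCat.of ℤ)) = (2 : ℤ) • (1 : ℤ) := by norm_num
      rw [this, k.hom.map_zsmul]
      norm_num
    rw [h2k] at this
    have hg : g (1 : ℤ) = x := by
      show (1 : ℤ) • x = x
      rw [one_smul]
    rw [hg] at this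
    exact this
  -- hence `I(A) = 0`
  have hzero : ∀ x : I.obj A, x = 0 := by
    intro x
    obtain ⟨y, hy⟩ := hdiv x
    rw [← hy, htor y]
  -- contradiction with `m.app A` mono
  rw [AddCommGrpCat.mono_iff_injective] at hmono
  have : ((1 : ZMod 2) : ZMod 2) = (0 : ZMod 2) := by
    apply hmono
    rw [hzero (m.app A (1 : ZMod 2)), hzero (m.app A (0 : ZMod 2))]
  exact one_ne_zero this
end
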